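/- (Theorem 4, quadratic convergence of exact DPO-Mix-P.) Suppose θ^(0) = 0 and the parameters evolve by the exact DPO-Mix-P update with learning rate η = 1/(β²A): θ^(t+1)_a = θ^(t)_a + (1/(βA)) Σ_{a'∈𝒴} Δ(a,a';θ^(t)) / σ'(β(θ^(t)_a − θ^(t)_{a'})) for every a ∈ 𝒴. Then for every number of iterations T ∈ ℕ and all a, a' ∈ 𝒴, |δ(a,a';θ^(T))| ≤ 0.611^(2^T − 1). -/

import Mathlib

/-- The sigmoid function. -/
noncomputable def sig (x : ℝ) : ℝ := 1 / (1 + Real.exp (-x))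

/-- The derivative of the sigmoid function. -/
noncomputable def sig' (x : ℝ) : ℝ := sig x * (1 - sig x)


lemma sig_pos (x : ℝ) : 0 < sig x := by unfold sig; positivity

lemma sig_lt_one (x : ℝ) : sig x < 1 := by
  unfold sig
  rw [div_lt_one (by positivity)]
  linarith [Real.exp_pos (-x)]

lemma sig'_pos (x : ℝ) : 0 < sig' x := by
  have h1 := sig_pos x; have h2 := sig_lt_one x
  unfold sig'; nlinarith

lemma sig'_eq (x : ℝ) : sig' x = Real.exp x / (1 + Real.exp x)^2 := by
  unfold sig' sig
  rw [Real.exp_neg]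
  have h := (Real.exp_pos x).ne'
  field_simp
  ring

lemma sig_mono : Monotone sig := by
  intro x y hxy
  unfold sig
  have h1 : (0:ℝ) < 1 + Real.exp (-y) := by positivity
  apply one_div_le_one_div_of_le h1
  have := Real.exp_le_exp.mpr (neg_le_neg hxy)
  linarith

lemma sig_neg (x : ℝ) : sig (-x) = 1 - sig x := by
  unfold sig
  rw [neg_neg, Real.exp_neg]
  have h := (Real.exp_pos x).ne'
  have h2 : (0:ℝ) < 1 + Real.exp x := by positivity
  field_simp
  ring

lemma sig'_anti {v V : ℝ} (hv : |v| ≤ V) : sig' V ≤ sig' v := by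
  obtain ⟨h1, h2⟩ := abs_le.mp hv
  have hs1 : sig (-V) ≤ sig v := sig_mono h1
  have hs2 : sig v ≤ sig V := sig_mono h2
  rw [sig_neg] at hs1
  unfold sig'
  nlinarith [mul_nonneg (sub_nonneg.mpr hs2) (sub_nonneg.mpr hs1)]

lemma hasDerivAt_sig (x : ℝ) : HasDerivAt sig (sig' x) x := by
  have h1 : HasDerivAt (fun y : ℝ => 1 + Real.exp (-y)) (-Real.exp (-x)) x := by
    simpa using ((Real.hasDerivAt_exp (-x)).comp x (hasDerivAt_neg x)).const_add 1
  have hne : (1 + Real.exp (-x)) ≠ 0 := by positivity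
  have h2 := h1.inv hne
  have h3 : sig = fun y : ℝ => (1 + Real.exp (-y))⁻¹ := by
    funext y; simp [sig, one_div]
  rw [h3]
  refine h2.congr_deriv ?_
  unfold sig' sig
  have h := (Real.exp_pos (-x)).ne'
  field_simp
  ring

lemma hasDerivAt_sig' (x : ℝ) : HasDerivAt sig' (sig' x * (1 - 2 * sig x)) x := by
  have h := (hasDerivAt_sig x).mul ((hasDerivAt_sig x).const_sub 1)
  have h3 : sig' = fun y => sig y * (1 - sig y) := rfl
  rw [h3]
  refine h.congr_deriv ?_
  unfold sig'
  ring

lemma continuous_sig : Continuous sig :=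
  continuous_iff_continuousAt.mpr fun x => (hasDerivAt_sig x).continuousAt

lemma continuous_sig' : Continuous sig' :=
  (continuous_sig.mul (continuous_const.sub continuous_sig))

lemma sig''_bound (x : ℝ) : |sig' x * (1 - 2 * sig x)| ≤ 0.1 := by
  have h1 := sig_pos x
  have h2 := sig_lt_one x
  set s := sig x with hs
  have : sig' x = s * (1 - s) := rfl
  rw [this, abs_le]
  constructor
  · nlinarith [sq_nonneg (s - 1/2), sq_nonneg (s - 4/5), sq_nonneg (s - 79/100), sq_nonneg (s*(1-s))]
  · nlinarith [sq_nonneg (s - 1/2), sq_nonneg (s - 1/5), sq_nonneg (s - 21/100), sq_nonneg (s*(1-s))]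

lemma sig'_lipschitz (a b : ℝ) : |sig' a - sig' b| ≤ 0.1 * |a - b| := by
  have h := Convex.norm_image_sub_le_of_norm_hasDerivWithin_le
    (f := sig') (f' := fun x => sig' x * (1 - 2 * sig x)) (s := Set.univ)
    (C := 0.1)
    (fun x _ => (hasDerivAt_sig' x).hasDerivWithinAt)
    (fun x _ => by simpa [← abs_mul] using sig''_bound x)
    convex_univ (Set.mem_univ b) (Set.mem_univ a)
  simpa [Real.norm_eq_abs] using h

lemma taylor_sig (u v : ℝ) : |sig u - sig v - sig' v * (u - v)| ≤ 0.05 * (u - v)^2 := by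
  have hInt : ∀ w z : ℝ, IntervalIntegrable sig' MeasureTheory.volume w z :=
    fun w z => continuous_sig'.intervalIntegrable w z
  have h1 : ∫ t in v..u, sig' t = sig u - sig v :=
    intervalIntegral.integral_eq_sub_of_hasDerivAt (fun t _ => hasDerivAt_sig t) (hInt v u)
  have h2 : ∫ t in v..u, (sig' t - sig' v) = sig u - sig v - sig' v * (u - v) := by
    rw [intervalIntegral.integral_sub (hInt v u) (intervalIntegrable_const), h1,
      intervalIntegral.integral_const]
    ring_nf
  rw [← h2]
  have hbound : ∀ᵐ (t : ℝ) ∂(MeasureTheory.volume.restrict (Set.uIoc v u)),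
      ‖sig' t - sig' v‖ ≤ 0.1 * |t - v| := by
    filter_upwards with t
    simpa [Real.norm_eq_abs] using sig'_lipschitz t v
  have hg : IntervalIntegrable (fun t => 0.1 * |t - v|) MeasureTheory.volume v u :=
    (Continuous.intervalIntegrable (by continuity) v u)
  have h3 := intervalIntegral.norm_integral_le_abs_of_norm_le hbound hg
  rw [Real.norm_eq_abs] at h3
  refine h3.trans ?_
  have h4 : ∫ t in v..u, 0.1 * |t - v| = 0.1 * ∫ t in v..u, |t - v| := by
    exact intervalIntegral.integral_const_mul 0.1 (fun t => |t - v|)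
  have hid : ∫ t in v..u, (t - v) = ((u-v)^2 - 0)/2 := by
    rw [intervalIntegral.integral_comp_sub_right (fun x => x) v, integral_id]
    ring
  rcases le_total v u with hle | hle
  · have habs : ∫ t in v..u, |t - v| = ∫ t in v..u, (t - v) := by
      apply intervalIntegral.integral_congr
      intro t ht
      rw [Set.uIcc_of_le hle] at ht
      exact abs_of_nonneg (by linarith [ht.1])
    rw [h4, habs, hid, abs_of_nonneg (by nlinarith)]
    nlinarith
  · have habs : ∫ t in v..u, |t - v| = ∫ t in v..u, (v - t) := by
      apply intervalIntegral.integral_congr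
      intro t ht
      rw [Set.uIcc_of_ge hle] at ht
      show |t - v| = v - t
      rw [abs_of_nonpos (by linarith [ht.2])]
      ring
    have hid2 : ∫ t in v..u, (v - t) = -(((u-v)^2 - 0)/2) := by
      rw [← hid, ← intervalIntegral.integral_neg]
      apply intervalIntegral.integral_congr
      intro t _
      ring
    rw [h4, habs, hid2]
    rw [abs_of_nonpos (by nlinarith)]
    nlinarith

lemma sig'_zero : sig' 0 = 1/4 := by
  unfold sig' sig
  rw [neg_zero, Real.exp_zero]
  norm_num

lemma exp_14_lt : Real.exp 1.4 < 4.0553 := by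
  have h5 : Real.exp 1.4 ^ 5 = Real.exp 1 ^ 7 := by
    rw [← Real.exp_nat_mul, ← Real.exp_nat_mul]; norm_num
  have he := Real.exp_one_lt_d9
  have hlt : Real.exp 1.4 ^ 5 < 4.0553 ^ 5 := by
    rw [h5]
    calc Real.exp 1 ^ 7 < 2.7182818286 ^ 7 := by gcongr
      _ < 4.0553 ^ 5 := by norm_num
  exact lt_of_pow_lt_pow_left₀ 5 (by norm_num) hlt

lemma exp_125_lt : Real.exp 1.25 < 3.5 := by
  have h5 : Real.exp 1.25 ^ 4 = Real.exp 1 ^ 5 := by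
    rw [← Real.exp_nat_mul, ← Real.exp_nat_mul]; norm_num
  have he := Real.exp_one_lt_d9
  have hlt : Real.exp 1.25 ^ 4 < 3.5 ^ 4 := by
    rw [h5]
    calc Real.exp 1 ^ 5 < 2.7182818286 ^ 5 := by gcongr
      _ < 3.5 ^ 4 := by norm_num
  exact lt_of_pow_lt_pow_left₀ 4 (by norm_num) hlt

lemma sig'_lb {x c : ℝ} (hx : 0 ≤ x) (hc : Real.exp x ≤ c) : c / (1 + c)^2 ≤ sig' x := by
  rw [sig'_eq]
  have h1 : (1:ℝ) ≤ Real.exp x := Real.one_le_exp hx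
  have h2 : (0:ℝ) < 1 + Real.exp x := by positivity
  have h3 : (0:ℝ) < 1 + c := by linarith
  rw [div_le_div_iff₀ (by positivity) (by positivity)]
  nlinarith [mul_nonneg (sub_nonneg.mpr hc) (sub_nonneg.mpr (show (1:ℝ) ≤ Real.exp x * c by nlinarith))]

lemma step_bound {Y : Type*} [Fintype Y] [Nonempty Y]
    (A : ℕ) (hA : A = Fintype.card Y)
    (r : Y → ℝ) (β : ℝ) (hβ : 0 < β) (θ : ℕ → Y → ℝ)
    (hupd : ∀ t a, θ (t + 1) a = θ t a +
      (1 / (β * A)) * ∑ a' : Y,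
        (sig (r a - r a') - sig (β * (θ t a - θ t a'))) /
          sig' (β * (θ t a - θ t a')))
    (t : ℕ) (B V : ℝ) (hB0 : 0 ≤ B)
    (hV : ∀ a a', |β * (θ t a - θ t a')| ≤ V)
    (hB : ∀ a a', |r a - r a' - β * (θ t a - θ t a')| ≤ B)
    (a a' : Y) :
    |r a - r a' - β * (θ (t+1) a - θ (t+1) a')| ≤ 0.1 / sig' V * B^2 := by
  classical
  have hcard : 0 < A := hA ▸ Fintype.card_pos
  have hAr : (0:ℝ) < (A:ℝ) := by exact_mod_cast hcard
  have hs'V : 0 < sig' V := sig'_pos V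
  set f : Y → Y → ℝ := fun c b =>
    (sig (r c - r b) - sig (β * (θ t c - θ t b))) / sig' (β * (θ t c - θ t b)) with hf
  set d : Y → Y → ℝ := fun c b => r c - r b - β * (θ t c - θ t b) with hd
  -- pointwise bound
  have hpt : ∀ c b, |d c b - f c b| ≤ 0.05 / sig' V * B^2 := by
    intro c b
    have hvb := hV c b
    have hdb := hB c b
    have hs'v : 0 < sig' (β * (θ t c - θ t b)) := sig'_pos _
    have hmono : sig' V ≤ sig' (β * (θ t c - θ t b)) := sig'_anti hvb
    have heq : d c b - f c b =
        (sig' (β * (θ t c - θ t b)) * d c b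
          - (sig (r c - r b) - sig (β * (θ t c - θ t b)))) / sig' (β * (θ t c - θ t b)) := by
      rw [hf, hd]
      field_simp
      all_goals ring
    have hnum : |sig' (β * (θ t c - θ t b)) * d c b
        - (sig (r c - r b) - sig (β * (θ t c - θ t b)))| ≤ 0.05 * B^2 := by
      have htay := taylor_sig (r c - r b) (β * (θ t c - θ t b))
      have h1 : |sig' (β * (θ t c - θ t b)) * d c b
          - (sig (r c - r b) - sig (β * (θ t c - θ t b)))|
          = |sig (r c - r b) - sig (β * (θ t c - θ t b))
              - sig' (β * (θ t c - θ t b)) * (r c - r b - β * (θ t c - θ t b))| := by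
        rw [abs_sub_comm]
        all_goals (congr 1; rw [hd])
      rw [h1]
      refine htay.trans ?_
      have h2 : (r c - r b - β * (θ t c - θ t b))^2 ≤ B^2 := by
        rw [← sq_abs]
        exact pow_le_pow_left₀ (abs_nonneg _) hdb 2
      nlinarith
    rw [heq, abs_div, abs_of_pos hs'v]
    calc _ ≤ (0.05 * B^2) / sig' V := by
          apply div_le_div₀ (by positivity) hnum hs'V hmono
      _ = 0.05 / sig' V * B^2 := by ring
  -- main identity
  have hβA : β * (1 / (β * (A:ℝ))) = 1 / (A:ℝ) := by field_simp
  have hsum : ∑ b : Y, (d a b - d a' b) = (A:ℝ) * (r a - r a' - β * (θ t a - θ t a')) := by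
    have hc : ∀ b : Y, d a b - d a' b = r a - r a' - β * (θ t a - θ t a') := by
      intro b; rw [hd]; ring
    rw [Finset.sum_congr rfl (fun b _ => hc b), Finset.sum_const]
    rw [Finset.card_univ, ← hA, nsmul_eq_mul]
  have key : r a - r a' - β * (θ (t+1) a - θ (t+1) a')
      = (1/(A:ℝ)) * ∑ b : Y, ((d a b - f a b) - (d a' b - f a' b)) := by
    have e1 : r a - r a' - β * (θ (t+1) a - θ (t+1) a')
        = (r a - r a' - β * (θ t a - θ t a'))
          - (1/(A:ℝ)) * ((∑ b : Y, f a b) - (∑ b : Y, f a' b)) := by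
      rw [hupd t a, hupd t a']
      have : β * (θ t a + 1 / (β * ↑A) * ∑ b : Y, f a b
          - (θ t a' + 1 / (β * ↑A) * ∑ b : Y, f a' b))
          = β * (θ t a - θ t a') + (β * (1/(β*(A:ℝ)))) * ((∑ b : Y, f a b) - (∑ b : Y, f a' b)) := by
        ring
      rw [this, hβA]
      ring
    rw [e1]
    simp only [Finset.sum_sub_distrib] at hsum ⊢
    field_simp
    linarith [hsum]
  rw [key, abs_mul, abs_of_pos (by positivity : (0:ℝ) < 1/(A:ℝ))]
  have hbd : |∑ b : Y, ((d a b - f a b) - (d a' b - f a' b))|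
      ≤ (A:ℝ) * (0.1 / sig' V * B^2) := by
    calc |∑ b : Y, ((d a b - f a b) - (d a' b - f a' b))|
        ≤ ∑ b : Y, |(d a b - f a b) - (d a' b - f a' b)| := Finset.abs_sum_le_sum_abs _ _
      _ ≤ ∑ _b : Y, (0.1 / sig' V * B^2) := by
          apply Finset.sum_le_sum
          intro b _
          calc |(d a b - f a b) - (d a' b - f a' b)|
              ≤ |d a b - f a b| + |d a' b - f a' b| := abs_sub _ _
            _ ≤ 0.05 / sig' V * B^2 + 0.05 / sig' V * B^2 := add_le_add (hpt a b) (hpt a' b)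
            _ = 0.1 / sig' V * B^2 := by ring
      _ = (A:ℝ) * (0.1 / sig' V * B^2) := by
          rw [Finset.sum_const, Finset.card_univ, ← hA, nsmul_eq_mul]
  calc 1/(A:ℝ) * |∑ b : Y, ((d a b - f a b) - (d a' b - f a' b))|
      ≤ 1/(A:ℝ) * ((A:ℝ) * (0.1 / sig' V * B^2)) := by
        apply mul_le_mul_of_nonneg_left hbd (by positivity)
    _ = 0.1 / sig' V * B^2 := by field_simp

lemma sig'_14_bound : (0.1:ℝ) / sig' 1.4 * 0.4^2 ≤ 0.101 := by
  have hlb : (4.0553:ℝ)/(1+4.0553)^2 ≤ sig' 1.4 := sig'_lb (by norm_num) exp_14_lt.le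
  have hpos : (0:ℝ) < sig' 1.4 := sig'_pos _
  rw [div_mul_eq_mul_div, div_le_iff₀ hpos]
  nlinarith [hlb]

lemma sig'_125_bound : (0.1:ℝ) / sig' 1.25 ≤ 0.611 := by
  have hlb : (3.5:ℝ)/(1+3.5)^2 ≤ sig' 1.25 := sig'_lb (by norm_num) exp_125_lt.le
  have hpos : (0:ℝ) < sig' 1.25 := sig'_pos _
  rw [div_le_iff₀ hpos]
  nlinarith [hlb]

theorem dpo_mix_p_quadratic_convergence'
    {Y : Type*} [Fintype Y] [Nonempty Y]
    (A : ℕ) (hA : A = Fintype.card Y)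
    (r : Y → ℝ) (hr : ∀ a, 0 ≤ r a ∧ r a ≤ 1)
    (β : ℝ) (hβ : 0 < β)
    (θ : ℕ → Y → ℝ) (hθ0 : θ 0 = 0)
    (hupd : ∀ t a, θ (t + 1) a = θ t a +
      (1 / (β * A)) * ∑ a' : Y,
        (sig (r a - r a') - sig (β * (θ t a - θ t a'))) /
          sig' (β * (θ t a - θ t a'))) :
    ∀ (T : ℕ) (a a' : Y),
      |r a - r a' - β * (θ T a - θ T a')| ≤ (0.611 : ℝ) ^ (2 ^ T - 1) := by
  have hu : ∀ a a' : Y, |r a - r a'| ≤ 1 := by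
    intro a a'
    rw [abs_le]
    constructor
    · linarith [(hr a).1, (hr a').2]
    · linarith [(hr a).2, (hr a').1]
  have hδ0 : ∀ a a' : Y, |r a - r a' - β * (θ 0 a - θ 0 a')| ≤ 1 := by
    intro a a'
    simpa [hθ0] using hu a a'
  have hv0 : ∀ a a' : Y, |β * (θ 0 a - θ 0 a')| ≤ 0 := by
    intro a a'; simp [hθ0]
  have hvb : ∀ (t : ℕ) (B : ℝ), (∀ a a', |r a - r a' - β * (θ t a - θ t a')| ≤ B) →
      ∀ a a', |β * (θ t a - θ t a')| ≤ 1 + B := by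
    intro t B hB a a'
    calc |β * (θ t a - θ t a')|
        = |(r a - r a') - (r a - r a' - β * (θ t a - θ t a'))| := by congr 1; ring
      _ ≤ |r a - r a'| + |r a - r a' - β * (θ t a - θ t a')| := abs_sub _ _
      _ ≤ 1 + B := add_le_add (hu a a') (hB a a')
  have h1 : ∀ a a' : Y, |r a - r a' - β * (θ 1 a - θ 1 a')| ≤ 0.4 := by
    intro a a'
    have h := step_bound A hA r β hβ θ hupd 0 1 0 (by norm_num) hv0 hδ0 a a'
    rw [sig'_zero] at h
    calc |r a - r a' - β * (θ 1 a - θ 1 a')| ≤ 0.1 / (1/4) * 1^2 := h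
      _ ≤ 0.4 := by norm_num
  have h2 : ∀ a a' : Y, |r a - r a' - β * (θ 2 a - θ 2 a')| ≤ 0.101 := by
    intro a a'
    have hv1 : ∀ a a' : Y, |β * (θ 1 a - θ 1 a')| ≤ 1.4 := by
      intro a a'
      have := hvb 1 0.4 h1 a a'
      linarith
    have h := step_bound A hA r β hβ θ hupd 1 0.4 1.4 (by norm_num) hv1 h1 a a'
    exact h.trans sig'_14_bound
  set b : ℕ → ℝ := fun n => min 0.101 ((0.611:ℝ) ^ (2^(n+2) - 1)) with hbdef
  have hbpos : ∀ n, 0 < b n := by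
    intro n
    apply lt_min (by norm_num)
    positivity
  have hb1 : ∀ n, b n ≤ 0.101 := fun n => min_le_left _ _
  have hb2 : ∀ n, b n ≤ (0.611:ℝ) ^ (2^(n+2) - 1) := fun n => min_le_right _ _
  have main : ∀ n, ∀ a a' : Y, |r a - r a' - β * (θ (n+2) a - θ (n+2) a')| ≤ b n := by
    intro n
    induction n with
    | zero =>
      intro a a'
      refine le_min (h2 a a') ?_
      refine (h2 a a').trans ?_
      norm_num
    | succ n ih =>
      intro a a'
      have hv : ∀ a a' : Y, |β * (θ (n+2) a - θ (n+2) a')| ≤ 1.25 := by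
        intro a a'
        have hx := hvb (n+2) (b n) ih a a'
        have hy := hb1 n
        linarith
      have hstep := step_bound A hA r β hβ θ hupd (n+2) (b n) 1.25 (hbpos n).le hv ih a a'
      have hidx : n + 1 + 2 = n + 2 + 1 := by omega
      rw [hidx]
      have hK : (0.1:ℝ) / sig' 1.25 * (b n)^2 ≤ 0.611 * (b n)^2 :=
        mul_le_mul_of_nonneg_right sig'_125_bound (sq_nonneg _)
      refine le_min ?_ ?_
      · calc |r a - r a' - β * (θ (n+2+1) a - θ (n+2+1) a')|
            ≤ 0.1 / sig' 1.25 * (b n)^2 := hstep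
          _ ≤ 0.611 * (b n)^2 := hK
          _ ≤ 0.101 := by nlinarith [hbpos n, hb1 n]
      · have hexp : (2^(n+2) - 1)*2 + 1 = 2^(n+1+2) - 1 := by
          have hp : (2:ℕ)^(n+1+2) = 2 * 2^(n+2) := by
            rw [show n+1+2 = (n+2)+1 from rfl, pow_succ]; ring
          have hq : 1 ≤ (2:ℕ)^(n+2) := Nat.one_le_two_pow
          omega
        calc |r a - r a' - β * (θ (n+2+1) a - θ (n+2+1) a')|
            ≤ 0.1 / sig' 1.25 * (b n)^2 := hstep
          _ ≤ 0.611 * (b n)^2 := hK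
          _ ≤ 0.611 * ((0.611:ℝ) ^ (2^(n+2) - 1))^2 := by
              have := hb2 n
              nlinarith [hbpos n]
          _ = (0.611:ℝ) ^ ((2^(n+2) - 1)*2 + 1) := by
              rw [← pow_mul, pow_succ]
              ring
          _ = (0.611:ℝ) ^ (2^(n+1+2) - 1) := by rw [hexp]
  intro T a a'
  match T with
  | 0 => simpa using hδ0 a a'
  | 1 =>
    refine (h1 a a').trans ?_
    norm_num
  | (n+2) => exact ((main n a a').trans (hb2 n))


/-- **Theorem 4 (Upper bound of DPO-Mix-P).**
Under tabular softmax parametrization with uniform reference policy,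
rewards in `[0,1]`, initialization `θ⁰ = 0`, and the exact DPO-Mix-P
update with learning rate `η = 1/(β²A)`, the reward-gap errors converge
quadratically: `|δ(a,a';θ^T)| ≤ 0.611^(2^T - 1)`. -/
theorem dpo_mix_p_quadratic_convergence
    {Y : Type*} [Fintype Y] [Nonempty Y]
    (A : ℕ) (hA : A = Fintype.card Y)
    (r : Y → ℝ) (hr : ∀ a, 0 ≤ r a ∧ r a ≤ 1)
    (β : ℝ) (hβ : 0 < β)
    (θ : ℕ → Y → ℝ) (hθ0 : θ 0 = 0)
    (hupd : ∀ t a, θ (t + 1) a = θ t a +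
      (1 / (β * A)) * ∑ a' : Y,
        (sig (r a - r a') - sig (β * (θ t a - θ t a'))) /
          sig' (β * (θ t a - θ t a'))) :
    ∀ (T : ℕ) (a a' : Y),
      |r a - r a' - β * (θ T a - θ T a')| ≤ (0.611 : ℝ) ^ (2 ^ T - 1) :=
  dpo_mix_p_quadratic_convergence' A hA r hr β hβ θ hθ0 hupd
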